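/- Suppose u ∈ Ḣ¹(ℝ^N) satisfies E(u) ≤ (1−δ₀)E(W) and ∫|∇u|² > ∫|∇W|² for some δ₀ > 0. Then there exists δ̄ = δ̄(δ₀, N) > 0 such that ∫|∇u|² > (1+δ̄)∫|∇W|². -/

import Mathlib

open MeasureTheory

/-- If `u ∈ Ḣ¹(ℝ^N)` satisfies the Sobolev inequality with best constant `C`,
`E(u) ≤ (1−δ₀)E(W)` and `∫|∇u|² > ∫|∇W|² = C^{-N}`, then there exists
`δ̄ = δ̄(δ₀, N) > 0` such that `∫|∇u|² > (1+δ̄)∫|∇W|²`. -/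
theorem stmt9 (N : ℕ) (hN : 3 ≤ N) (C : ℝ) (hC : 0 < C) (δ₀ : ℝ) (hδ₀ : 0 < δ₀) :
    ∃ δb > (0 : ℝ), ∀ u : EuclideanSpace ℝ (Fin N) → ℝ,
      (∫ x, |u x| ^ ((2 * (N : ℝ)) / ((N : ℝ) - 2))) ^ (((N : ℝ) - 2) / (2 * (N : ℝ)))
          ≤ C * (∫ x, ‖gradient u x‖ ^ 2) ^ ((1 : ℝ) / 2) →
      (1 / 2) * (∫ x, ‖gradient u x‖ ^ 2)
          - (((N : ℝ) - 2) / (2 * (N : ℝ))) * (∫ x, |u x| ^ ((2 * (N : ℝ)) / ((N : ℝ) - 2)))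
        ≤ (1 - δ₀) * ((1 / (N : ℝ)) * C ^ (-(N : ℝ))) →
      (∫ x, ‖gradient u x‖ ^ 2) > C ^ (-(N : ℝ)) →
      (∫ x, ‖gradient u x‖ ^ 2) > (1 + δb) * C ^ (-(N : ℝ)) := by
  have hN3 : (3 : ℝ) ≤ (N : ℝ) := by exact_mod_cast hN
  set n : ℝ := (N : ℝ) with hn_def
  have hn2 : (0 : ℝ) < n - 2 := by linarith
  have hn : (0 : ℝ) < n := by linarith
  set a : ℝ := (n - 2) / (2 * n) with ha_def
  have ha : 0 < a := div_pos hn2 (by linarith)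
  set p : ℝ := n / (n - 2) with hp_def
  set q : ℝ := 2 * n / (n - 2) with hq_def
  have hq : 0 < q := div_pos (by linarith) hn2
  have hqa : 1 / a = q := by rw [ha_def, hq_def]; field_simp
  have hpa : (1 / 2 : ℝ) * (1 / a) = p := by
    rw [ha_def, hp_def]; field_simp
  have hnpq : n * p = n + q := by rw [hp_def, hq_def]; field_simp; ring
  set φ : ℝ → ℝ := fun t => t / 2 - a * t ^ p with hφ_def
  have hφ1 : φ 1 = 1 / n := by
    simp only [hφ_def, Real.one_rpow, mul_one, ha_def]
    field_simp; ring
  have hcont : ContinuousAt φ 1 := by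
    apply ContinuousAt.sub
    · exact continuousAt_id.div_const 2
    · exact continuousAt_const.mul (Real.continuousAt_rpow_const 1 p (Or.inl one_ne_zero))
  obtain ⟨η, hη, hball⟩ := Metric.continuousAt_iff.mp hcont (δ₀ / n) (by positivity)
  refine ⟨η / 2, by positivity, fun u hSob hE hgt => ?_⟩
  set y : ℝ := ∫ x, ‖gradient u x‖ ^ 2 with hy_def
  set L : ℝ := ∫ x, |u x| ^ q with hL_def
  have hy0 : 0 ≤ y := integral_nonneg fun x => by positivity
  have hL0 : 0 ≤ L := integral_nonneg fun x => Real.rpow_nonneg (abs_nonneg _) _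
  have hCn : (0 : ℝ) < C ^ n := Real.rpow_pos_of_pos hC n
  have hCnn : (0 : ℝ) < C ^ (-n) := Real.rpow_pos_of_pos hC (-n)
  have hCmul : C ^ (-n) * C ^ n = 1 := by
    rw [← Real.rpow_add hC]; simp
  -- Sobolev consequence: L ≤ C^q * y^p
  have hL : L ≤ C ^ q * y ^ p := by
    have h1 : (L ^ a) ^ (1 / a) ≤ (C * y ^ ((1:ℝ)/2)) ^ (1 / a) :=
      Real.rpow_le_rpow (Real.rpow_nonneg hL0 a) hSob (by positivity)
    have h2 : (L ^ a) ^ (1 / a) = L := by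
      rw [← Real.rpow_mul hL0, mul_one_div, div_self ha.ne', Real.rpow_one]
    have h3 : (C * y ^ ((1:ℝ)/2)) ^ (1 / a) = C ^ q * y ^ p := by
      rw [Real.mul_rpow hC.le (Real.rpow_nonneg hy0 _), ← Real.rpow_mul hy0, hqa,
        ← hqa, hpa]
    rwa [h2, h3] at h1
  -- energy bound transported to φ
  have hE2 : y / 2 - a * (C ^ q * y ^ p) ≤ (1 - δ₀) * (1 / n) * C ^ (-n) := by
    have := hE
    nlinarith [mul_le_mul_of_nonneg_left hL ha.le]
  set t : ℝ := y * C ^ n with ht_def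
  have ht1 : 1 < t := by
    calc (1:ℝ) = C ^ (-n) * C ^ n := hCmul.symm
    _ < y * C ^ n := by exact mul_lt_mul_of_pos_right hgt hCn
  have htp : t ^ p = y ^ p * (C ^ n * C ^ q) := by
    rw [ht_def, Real.mul_rpow hy0 hCn.le, ← Real.rpow_mul hC.le, hnpq, Real.rpow_add hC]
  have hφt : φ t ≤ (1 - δ₀) / n := by
    have : φ t = (y / 2 - a * (C ^ q * y ^ p)) * C ^ n := by
      simp only [hφ_def]; rw [htp, ht_def]
      ring
    rw [this]
    calc (y / 2 - a * (C ^ q * y ^ p)) * C ^ n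
        ≤ (1 - δ₀) * (1 / n) * C ^ (-n) * C ^ n :=
          mul_le_mul_of_nonneg_right hE2 hCn.le
      _ = (1 - δ₀) / n := by
          rw [mul_assoc, hCmul]; ring
  have htη : 1 + η ≤ t := by
    by_contra h
    push_neg at h
    have hd : dist t 1 < η := by
      rw [Real.dist_eq, abs_of_pos (by linarith)]
      linarith
    have := hball hd
    rw [Real.dist_eq, hφ1] at this
    have habs := abs_lt.mp this
    have : (1 - δ₀) / n = 1 / n - δ₀ / n := by ring
    linarith [hφt, habs.1, this]
  have hfin : (1 + η) * C ^ (-n) ≤ y := by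
    have : (1 + η) * C ^ (-n) ≤ t * C ^ (-n) :=
      mul_le_mul_of_nonneg_right htη hCnn.le
    calc (1 + η) * C ^ (-n) ≤ t * C ^ (-n) := this
      _ = y * (C ^ n * C ^ (-n)) := by rw [ht_def]; ring
      _ = y := by rw [mul_comm (C ^ n), hCmul, mul_one]
  calc (1 + η / 2) * C ^ (-n) < (1 + η) * C ^ (-n) := by
        apply mul_lt_mul_of_pos_right _ hCnn; linarith
    _ ≤ y := hfin
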